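/- A function f : 2^[n] → ℝ satisfies Tf = 0 if and only if f is modular; consequently the kernel of T is a linear subspace of dimension n + 1 and the image of T has dimension 2^n − n − 1. -/
import Mathlib


/-- A function on subsets of `[n]` is modular if
`f (I ∩ J) + f (I ∪ J) = f I + f J` for all `I, J`. -/
def Modular {n : ℕ} (f : Finset (Fin n) → ℝ) : Prop :=
  ∀ I J : Finset (Fin n), f (I ∩ J) + f (I ∪ J) = f I + f J

/-- A pair `{I, J}` of subsets of `[n]` is close if
`|I| = |J| = |I ∩ J| + 1 = |I ∪ J| − 1`. -/
def ClosePair {n : ℕ} (I J : Finset (Fin n)) : Prop :=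
  I.card = J.card ∧ I.card = (I ∩ J).card + 1 ∧ I.card + 1 = (I ∪ J).card

/-- The linear map `T` sending `f : 2^[n] → ℝ` to its vector of supermodularity
values `s = (s_{I,J})`, indexed by the close pairs `P_n`. -/
noncomputable def Tmap (n : ℕ) :
    (Finset (Fin n) → ℝ) →ₗ[ℝ]
      ({p : Finset (Fin n) × Finset (Fin n) // ClosePair p.1 p.2} → ℝ) where
  toFun f := fun p => f (p.1.1 ∩ p.1.2) + f (p.1.1 ∪ p.1.2) - f p.1.1 - f p.1.2
  map_add' f g := by funext p; simp only [Pi.add_apply]; ring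
  map_smul' c f := by funext p; simp only [Pi.smul_apply, RingHom.id_apply, smul_eq_mul]; ring

lemma insert_inter_insert {n : ℕ} {K : Finset (Fin n)} {i j : Fin n}
    (hij : i ≠ j) : insert i K ∩ insert j K = K := by
  ext x
  simp only [Finset.mem_inter, Finset.mem_insert]
  constructor
  · rintro ⟨h1 | h1, h2 | h2⟩
    · exact absurd (h1 ▸ h2) hij
    · exact h2
    · exact h1
    · exact h2
  · intro hx; exact ⟨Or.inr hx, Or.inr hx⟩

lemma insert_union_insert {n : ℕ} {K : Finset (Fin n)} {i j : Fin n} :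
    insert i K ∪ insert j K = insert i (insert j K) := by
  ext x
  simp only [Finset.mem_union, Finset.mem_insert]
  tauto

lemma closePair_insert {n : ℕ} {K : Finset (Fin n)} {i j : Fin n}
    (hij : i ≠ j) (hi : i ∉ K) (hj : j ∉ K) :
    ClosePair (insert i K) (insert j K) := by
  have hI : (insert i K).card = K.card + 1 := Finset.card_insert_of_notMem hi
  have hJ : (insert j K).card = K.card + 1 := Finset.card_insert_of_notMem hj
  have hiJ : i ∉ insert j K := by
    simp only [Finset.mem_insert, not_or]; exact ⟨hij, hi⟩
  refine ⟨hI.trans hJ.symm, ?_, ?_⟩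
  · rw [insert_inter_insert hij, hI]
  · rw [insert_union_insert, Finset.card_insert_of_notMem hiJ, hJ, hI]

lemma step_of_close {n : ℕ} {f : Finset (Fin n) → ℝ}
    (h : ∀ I J : Finset (Fin n), ClosePair I J →
      f (I ∩ J) + f (I ∪ J) = f I + f J) :
    ∀ S : Finset (Fin n), ∀ i ∉ S, f (insert i S) = f S + (f {i} - f ∅) := by
  intro S
  induction S using Finset.induction_on with
  | empty => intro i _; simp
  | @insert j s hj ih =>
    intro i hi
    simp only [Finset.mem_insert, not_or] at hi
    obtain ⟨hij, his⟩ := hi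
    have hc := h (insert i s) (insert j s) (closePair_insert hij his hj)
    rw [insert_inter_insert hij, insert_union_insert] at hc
    have hstep := ih i his
    have := hc
    linarith [hc, hstep]

lemma repr_of_step {n : ℕ} {f : Finset (Fin n) → ℝ}
    (hstep : ∀ S : Finset (Fin n), ∀ i ∉ S, f (insert i S) = f S + (f {i} - f ∅)) :
    ∀ S : Finset (Fin n), f S = f ∅ + ∑ i ∈ S, (f {i} - f ∅) := by
  intro S
  induction S using Finset.induction_on with
  | empty => simp
  | @insert i s hi ih =>
    rw [hstep s i hi, ih, Finset.sum_insert hi]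
    ring

lemma modular_affine {n : ℕ} (a : ℝ) (b : Fin n → ℝ) :
    Modular (fun S => a + ∑ i ∈ S, b i) := by
  intro I J
  have h := Finset.sum_union_inter (s₁ := I) (s₂ := J) (f := b)
  dsimp only
  linarith

/-- The linear parametrization of modular functions. -/
noncomputable def Phi (n : ℕ) :
    (ℝ × (Fin n → ℝ)) →ₗ[ℝ] (Finset (Fin n) → ℝ) where
  toFun p := fun S => p.1 + ∑ i ∈ S, p.2 i
  map_add' p q := by
    funext S
    simp only [Prod.fst_add, Prod.snd_add, Pi.add_apply, Finset.sum_add_distrib]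
    ring
  map_smul' c p := by
    funext S
    simp only [Prod.smul_fst, Prod.smul_snd, Pi.smul_apply, smul_eq_mul,
      RingHom.id_apply]
    rw [mul_add, Finset.mul_sum]

lemma Phi_injective (n : ℕ) : Function.Injective (Phi n) := by
  rw [injective_iff_map_eq_zero]
  intro p hp
  have h0 : p.1 = 0 := by
    have := congrFun hp (∅ : Finset (Fin n))
    simpa [Phi] using this
  have h1 : ∀ i, p.2 i = 0 := by
    intro i
    have := congrFun hp ({i} : Finset (Fin n))
    simp [Phi, h0] at this
    exact this
  ext <;> simp [h0, h1]

theorem kernel_and_image_of_T {n : ℕ} (hn : 1 ≤ n) :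
    (∀ f : Finset (Fin n) → ℝ, Tmap n f = 0 ↔ Modular f) ∧
    Module.finrank ℝ (LinearMap.ker (Tmap n)) = n + 1 ∧
    Module.finrank ℝ (LinearMap.range (Tmap n)) = 2 ^ n - n - 1 := by
  have key : ∀ f : Finset (Fin n) → ℝ, Tmap n f = 0 ↔ Modular f := by
    intro f
    constructor
    · intro h
      have hc : ∀ I J : Finset (Fin n), ClosePair I J →
          f (I ∩ J) + f (I ∪ J) = f I + f J := by
        intro I J hIJ
        have := congrFun h ⟨(I, J), hIJ⟩
        simp only [Tmap, LinearMap.coe_mk, AddHom.coe_mk, Pi.zero_apply] at this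
        linarith
      have hrepr := repr_of_step (step_of_close hc)
      intro I J
      rw [hrepr (I ∩ J), hrepr (I ∪ J), hrepr I, hrepr J]
      have h := Finset.sum_union_inter (s₁ := I) (s₂ := J)
        (f := fun i => f {i} - f ∅)
      linarith
    · intro hm
      funext p
      simp only [Tmap, LinearMap.coe_mk, AddHom.coe_mk, Pi.zero_apply]
      have := hm p.1.1 p.1.2
      linarith
  have hker : LinearMap.ker (Tmap n) = LinearMap.range (Phi n) := by
    ext f
    simp only [LinearMap.mem_ker, LinearMap.mem_range]
    rw [key f]
    constructor
    · intro hm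
      refine ⟨(f ∅, fun i => f {i} - f ∅), ?_⟩
      funext S
      have hc : ∀ I J : Finset (Fin n), ClosePair I J →
          f (I ∩ J) + f (I ∪ J) = f I + f J := fun I J _ => hm I J
      exact (repr_of_step (step_of_close hc) S).symm
    · rintro ⟨p, rfl⟩
      exact modular_affine p.1 p.2
  have hkerrank : Module.finrank ℝ (LinearMap.ker (Tmap n)) = n + 1 := by
    rw [hker, LinearMap.finrank_range_of_inj (Phi_injective n)]
    simp [Module.finrank_prod, Module.finrank_self, Module.finrank_fin_fun]
    ring
  refine ⟨key, hkerrank, ?_⟩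
  have hdom : Module.finrank ℝ (Finset (Fin n) → ℝ) = 2 ^ n := by
    rw [Module.finrank_pi]
    simp [Fintype.card_finset]
  have hrn := LinearMap.finrank_range_add_finrank_ker (Tmap n)
  rw [hkerrank, hdom] at hrn
  omega
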